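/- The biorthogonal system to the Riesz basis {g_*, (g_n)_{n∈ℤ}} of H_α^T is given by g_*^*(x) = 1 and g_n^*(x) = ∫₀^x e^{-αy/2} e_n^*(y) dy, where e_n^*(y) = (1 − e^{-2λT}) e^{2λ·cut(y)} e_n(y); that is, ⟨g_m, g_n^*⟩_α = δ_{mn}, ⟨g_*, g_n^*⟩_α = 0, and ⟨g_m, g_*^*⟩_α = 0, ⟨g_*, g_*^*⟩_α = 1. -/

import Mathlib

open MeasureTheory Complex

/-- `cut T x = x mod T`. -/
noncomputable def cut (T x : ℝ) : ℝ := x - T * ⌊x / T⌋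

/-- `λ_n = 2πin/T - λ - α/2`. -/
noncomputable def lamn (T lm al : ℝ) (n : ℤ) : ℂ :=
  2 * Real.pi * Complex.I * n / T - lm - al / 2

/-- `g_n(x) = (λ_n √T)⁻¹ (e^{λ_n x} - 1)`. -/
noncomputable def gfun (T lm al : ℝ) (n : ℤ) (x : ℝ) : ℂ :=
  (Complex.exp (lamn T lm al n * x) - 1) / (lamn T lm al n * Real.sqrt T)

/-- `g_n'(x) = T^{-1/2} e^{λ_n x}`. -/
noncomputable def dgfun (T lm al : ℝ) (n : ℤ) (x : ℝ) : ℂ :=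
  Complex.exp (lamn T lm al n * x) / (Real.sqrt T : ℝ)

/-- `g_*(x) = 1` (and `g_*^* = g_*`). -/
noncomputable def gstar (_x : ℝ) : ℂ := 1

/-- `e_n(x) = T^{-1/2} exp((2πin/T - λ)x)`. -/
noncomputable def efun (T lm : ℝ) (n : ℤ) (x : ℝ) : ℂ :=
  (1 / Real.sqrt T : ℝ) • Complex.exp ((2 * Real.pi * Complex.I * n / T - lm) * x)

/-- `e_n^*(y) = (1 - e^{-2λT}) e^{2λ cut(y)} e_n(y)`. -/
noncomputable def enstar (T lm : ℝ) (n : ℤ) (y : ℝ) : ℂ :=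
  ((1 - Real.exp (-2 * lm * T)) * Real.exp (2 * lm * cut T y)) • efun T lm n y

/-- the derivative of `g_n^*`, i.e. `y ↦ e^{-αy/2} e_n^*(y)`. -/
noncomputable def dgnstar (T lm al : ℝ) (n : ℤ) (y : ℝ) : ℂ :=
  Real.exp (-al * y / 2) • enstar T lm n y

/-- `g_n^*(x) = ∫₀^x e^{-αy/2} e_n^*(y) dy`. -/
noncomputable def gnstar (T lm al : ℝ) (n : ℤ) (x : ℝ) : ℂ :=
  ∫ y in (0:ℝ)..x, dgnstar T lm al n y

private lemma key_integrand (T lm al : ℝ) (hT : 0 < T) (m n : ℤ) (y : ℝ) :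
    dgfun T lm al m y * (starRingEnd ℂ) (dgnstar T lm al n y) * Real.exp (al * y)
      = (((1 - Real.exp (-2 * lm * T)) / T : ℝ) : ℂ)
          * Real.exp (-2 * lm * T * (⌊y / T⌋ : ℝ))
          * Complex.exp (2 * Real.pi * Complex.I * (m - n) / T * y) := by
  have hT0 : (T : ℂ) ≠ 0 := by exact_mod_cast hT.ne'
  have hs : (Real.sqrt T : ℂ) * (Real.sqrt T : ℂ) = (T : ℂ) := by
    rw [← Complex.ofReal_mul, Real.mul_self_sqrt hT.le]
  simp only [dgfun, dgnstar, enstar, efun, lamn, cut, Complex.real_smul, smul_eq_mul, map_mul,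
    Complex.conj_ofReal, ← Complex.exp_conj, map_sub, map_div₀, map_ofNat,
    Complex.conj_I, map_intCast, Complex.ofReal_exp, Complex.ofReal_mul,
    Complex.ofReal_sub, Complex.ofReal_div, Complex.ofReal_neg, Complex.ofReal_one,
    Complex.ofReal_ofNat, Complex.ofReal_intCast, map_neg, map_one, map_ofNat]
  have hsT : (Real.sqrt T : ℂ) ≠ 0 := by
    simpa using (Real.sqrt_pos.2 hT).ne'
  have hs2 : (Real.sqrt T : ℂ) ^ 2 = (T : ℂ) := by rw [sq, hs]
  field_simp
  rw [hs2]
  ring_nf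
  simp only [mul_assoc, ← Complex.exp_add]
  ring_nf
  congr 1 <;> congr 1 <;> try congr 1
  all_goals field_simp
  all_goals ring


lemma floor_eq_on {T : ℝ} (hT : 0 < T) {k : ℕ} {y : ℝ}
    (hy : y ∈ Set.Ico ((k:ℝ)*T) (((k:ℝ)+1)*T)) : ⌊y/T⌋ = (k:ℤ) := by
  rcases hy with ⟨h1, h2⟩
  rw [Int.floor_eq_iff]
  exact ⟨by push_cast; exact (le_div_iff₀ hT).2 (by linarith),
    by push_cast; exact (div_lt_iff₀ hT).2 (by linarith)⟩

lemma union_Ico {T : ℝ} (hT : 0 < T) :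
    (⋃ k : ℕ, Set.Ico ((k:ℝ)*T) (((k:ℝ)+1)*T)) = Set.Ici (0:ℝ) := by
  ext y
  simp only [Set.mem_iUnion, Set.mem_Ico, Set.mem_Ici]
  constructor
  · rintro ⟨k, h1, _⟩
    have : (0:ℝ) ≤ (k:ℝ)*T := by positivity
    linarith
  · intro hy
    have h0 : (0:ℤ) ≤ ⌊y/T⌋ := Int.floor_nonneg.2 (by positivity)
    refine ⟨⌊y/T⌋.toNat, ?_, ?_⟩
    · have h1 : ((⌊y/T⌋.toNat : ℕ) : ℝ) ≤ y / T := by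
        rw [← Int.cast_natCast, Int.toNat_of_nonneg h0]; exact Int.floor_le _
      calc ((⌊y/T⌋.toNat : ℕ):ℝ) * T ≤ (y/T) * T := by nlinarith
        _ = y := by field_simp
    · have h1 : y / T < ((⌊y/T⌋.toNat : ℕ) : ℝ) + 1 := by
        rw [← Int.cast_natCast, Int.toNat_of_nonneg h0]; exact Int.lt_floor_add_one _
      calc y = (y/T)*T := by field_simp
        _ < (((⌊y/T⌋.toNat : ℕ):ℝ)+1) * T := by nlinarith

lemma main_integral (T lm : ℝ) (hT : 0 < T) (hl : 0 < lm) (m n : ℤ) :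
    (∫ y in Set.Ici (0:ℝ),
        (((1 - Real.exp (-2 * lm * T)) / T : ℝ) : ℂ)
          * Real.exp (-2 * lm * T * (⌊y / T⌋ : ℝ))
          * Complex.exp (2 * Real.pi * Complex.I * ((m : ℂ) - n) / T * y))
      = if m = n then 1 else 0 := by
  set c : ℂ := 2 * Real.pi * Complex.I * ((m : ℂ) - n) / T with hc
  set C : ℝ := (1 - Real.exp (-2 * lm * T)) / T with hC
  set f : ℝ → ℂ := fun y => (C : ℂ) * Real.exp (-2 * lm * T * (⌊y / T⌋ : ℝ)) * Complex.exp (c * y) with hf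
  set r : ℝ := Real.exp (-2 * lm * T) with hr
  have hr0 : 0 < r := Real.exp_pos _
  have hr1 : r < 1 := by
    rw [hr]
    apply Real.exp_lt_one_iff.2
    nlinarith
  -- measurability
  have hmeas : Measurable f := by
    have h1 : Measurable fun y : ℝ => ⌊y/T⌋ := (measurable_id.div_const T).floor
    have h2 : Measurable fun y : ℝ => ((⌊y/T⌋ : ℤ):ℝ) := measurable_from_top.comp h1
    have h3 : Measurable fun y : ℝ => (Real.exp (-2*lm*T*(⌊y/T⌋:ℝ)) : ℝ) :=
      Real.measurable_exp.comp (measurable_const.mul h2)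
    have h4 : Measurable fun y : ℝ => Complex.exp (c * y) :=
      (Complex.continuous_exp.comp (continuous_const.mul Complex.continuous_ofReal)).measurable
    exact (measurable_const.mul (Complex.measurable_ofReal.comp h3)).mul h4
  -- norm of cexp (c*y) is 1
  have hnorm : ∀ y : ℝ, ‖Complex.exp (c * y)‖ = 1 := by
    intro y
    have : c * y = ((2 * Real.pi * ((m:ℝ) - n) / T * y : ℝ) : ℂ) * Complex.I := by
      rw [hc]; push_cast; ring
    rw [this, Complex.norm_exp_ofReal_mul_I]
  -- integrability
  have hint : IntegrableOn f (Set.Ici (0:ℝ)) := by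
    have hg : IntegrableOn (fun y : ℝ => |C| * Real.exp (2*lm*T) * Real.exp (-(2*lm) * y))
        (Set.Ici (0:ℝ)) := by
      rw [integrableOn_Ici_iff_integrableOn_Ioi]
      exact (exp_neg_integrableOn_Ioi 0 (by nlinarith : (0:ℝ) < 2*lm)).const_mul _
    refine Integrable.mono' hg (hmeas.aestronglyMeasurable.restrict) ?_
    refine (ae_restrict_iff' measurableSet_Ici).2 (ae_of_all _ ?_)
    intro y _
    rw [hf]
    simp only [norm_mul, hnorm, mul_one, Complex.norm_real, Real.norm_eq_abs]
    have hfl : y/T - 1 < (⌊y/T⌋:ℝ) := Int.sub_one_lt_floor _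
    have hexp : Real.exp (-2*lm*T*(⌊y/T⌋:ℝ)) ≤ Real.exp (2*lm*T) * Real.exp (-(2*lm)*y) := by
      rw [← Real.exp_add]
      apply Real.exp_le_exp.2
      have h5 : -2*lm*T*(⌊y/T⌋:ℝ) < -2*lm*T*(y/T - 1) := by
        apply mul_lt_mul_of_neg_left hfl
        nlinarith
      have h6 : -2*lm*T*(y/T-1) = 2*lm*T - 2*lm*y := by field_simp; ring
      linarith
    calc |C| * |Real.exp (-2*lm*T*(⌊y/T⌋:ℝ))|
        = |C| * Real.exp (-2*lm*T*(⌊y/T⌋:ℝ)) := by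
          rw [abs_of_pos (Real.exp_pos _)]
      _ ≤ |C| * (Real.exp (2*lm*T) * Real.exp (-(2*lm)*y)) := by
          apply mul_le_mul_of_nonneg_left hexp (abs_nonneg _)
      _ = |C| * Real.exp (2*lm*T) * Real.exp (-(2*lm)*y) := by ring
  -- decompose
  rw [show (∫ y in Set.Ici (0:ℝ), (C:ℂ) * Real.exp (-2*lm*T*(⌊y/T⌋:ℝ)) * Complex.exp (c*y))
      = ∫ y in Set.Ici (0:ℝ), f y from rfl]
  rw [← union_Ico hT,
    integral_iUnion (fun k => measurableSet_Ico) ?hd (by rw [union_Ico hT]; exact hint)]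
  case hd =>
    intro i j hij
    refine Set.disjoint_left.2 fun y hyi hyj => hij ?_
    have := floor_eq_on hT hyi
    have := floor_eq_on hT hyj
    exact_mod_cast (by omega : (i:ℤ) = j)
  -- per-interval
  have hper : ∀ k : ℕ, (∫ y in Set.Ico ((k:ℝ)*T) (((k:ℝ)+1)*T), f y)
      = (C : ℂ) * (r^k : ℝ) * (if m = n then (T:ℂ) else 0) := by
    intro k
    have hcongr : ∀ y ∈ Set.Ico ((k:ℝ)*T) (((k:ℝ)+1)*T),
        f y = (C : ℂ) * (r^k : ℝ) * Complex.exp (c * y) := by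
      intro y hy
      rw [hf]
      dsimp only
      rw [floor_eq_on hT hy]
      congr 2
      rw [show -2*lm*T*(((k:ℤ):ℝ)) = (k:ℕ)*(-2*lm*T) by push_cast; ring,
        Real.exp_nat_mul]
    rw [setIntegral_congr_fun measurableSet_Ico hcongr]
    rw [integral_Ico_eq_integral_Ioo, ← integral_Ioc_eq_integral_Ioo,
      ← intervalIntegral.integral_of_le (by nlinarith : (k:ℝ)*T ≤ ((k:ℝ)+1)*T)]
    rw [intervalIntegral.integral_const_mul]
    congr 1
    by_cases hmn : m = n
    · subst hmn
      have : c = 0 := by rw [hc]; simp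
      rw [this]
      simp [intervalIntegral.integral_const]
      ring
    · have hc0 : c ≠ 0 := by
        rw [hc]
        have hmn' : (m:ℂ) - n ≠ 0 := by
          intro h
          apply hmn
          exact_mod_cast sub_eq_zero.1 h
        have hT0 : (T:ℂ) ≠ 0 := by exact_mod_cast hT.ne'
        simp [Real.pi_ne_zero, Complex.I_ne_zero, hmn', hT0]
      rw [integral_exp_mul_complex hc0]
      push_cast
      simp only [if_neg hmn]
      have hperiod : Complex.exp (c * (((k:ℝ)+1)*T)) = Complex.exp (c * ((k:ℝ)*T)) := by
        have hT0 : (T:ℂ) ≠ 0 := by exact_mod_cast hT.ne'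
        rw [show (c * (((k:ℝ)+1)*T) : ℂ) = c * ((k:ℝ)*T) + ((m - n : ℤ) : ℂ) * (2*Real.pi*Complex.I) by
          rw [hc]; push_cast; field_simp]
        rw [Complex.exp_add, Complex.exp_int_mul_two_pi_mul_I, mul_one]
      rw [show (c * ((↑k + 1) * ↑T) : ℂ) = c * (((k:ℝ):ℂ) + 1) * ↑T by push_cast; ring] at *
      rw [show (c * (((k:ℝ)+1)*T) : ℂ) = c * ((k:ℝ)+1) * T by push_cast; ring] at hperiod
      rw [show (c * ((k:ℝ)*T) : ℂ) = c * (k:ℝ) * T by push_cast; ring] at hperiod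
      rw [show (c * ((k:ℂ) * ↑T) : ℂ) = c * (k:ℝ) * T by push_cast; ring]
      rw [hperiod, sub_self, zero_div]
  simp only [hper]
  by_cases hmn : m = n
  · simp only [if_pos hmn]
    rw [tsum_mul_right]
    rw [show ∑' (k:ℕ), (C:ℂ) * ((r^k : ℝ):ℂ) = (C:ℂ) * ∑' (k:ℕ), ((r:ℂ))^k by
      rw [← tsum_mul_left]; push_cast; ring_nf]
    rw [tsum_geometric_of_norm_lt_one (by
      rw [Complex.norm_real, Real.norm_eq_abs, abs_of_pos hr0]; exact hr1)]
    have hT0 : (T:ℂ) ≠ 0 := by exact_mod_cast hT.ne'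
    have hr1' : (1:ℂ) - (r:ℂ) ≠ 0 := by
      intro h
      have : (r:ℂ) = 1 := by linear_combination -h
      have : r = 1 := by exact_mod_cast this
      linarith
    have hCc : ((C:ℂ)) = (1 - (r:ℂ))/(T:ℂ) := by rw [hC]; push_cast; ring
    rw [hCc]
    field_simp
  · simp [if_neg hmn]

/-- biorthogonality of `{g_*, (g_n)}` and `{g_*^*, (g_n^*)}` for the
inner product `⟨f,g⟩_α = f(0) conj(g(0)) + ∫₀^∞ f' conj(g') e^{αx} dx`. -/
theorem stmt_8 (T lm al : ℝ) (hT : 0 < T) (hl : 0 < lm) (hal : 0 < al) :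
    -- ⟨g_m, g_n^*⟩_α = δ_{mn}
    (∀ m n : ℤ,
      gfun T lm al m 0 * (starRingEnd ℂ) (gnstar T lm al n 0)
          + (∫ x in Set.Ici (0:ℝ),
              dgfun T lm al m x * (starRingEnd ℂ) (dgnstar T lm al n x) *
                Real.exp (al * x))
        = if m = n then 1 else 0) ∧
    -- ⟨g_*, g_n^*⟩_α = 0
    (∀ n : ℤ,
      gstar 0 * (starRingEnd ℂ) (gnstar T lm al n 0)
          + (∫ x in Set.Ici (0:ℝ),
              (0 : ℂ) * (starRingEnd ℂ) (dgnstar T lm al n x) * Real.exp (al * x))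
        = 0) ∧
    -- ⟨g_m, g_*^*⟩_α = 0
    (∀ m : ℤ,
      gfun T lm al m 0 * (starRingEnd ℂ) (gstar 0)
          + (∫ x in Set.Ici (0:ℝ),
              dgfun T lm al m x * (starRingEnd ℂ) (0 : ℂ) * Real.exp (al * x))
        = 0) ∧
    -- ⟨g_*, g_*^*⟩_α = 1
    (gstar 0 * (starRingEnd ℂ) (gstar 0)
        + (∫ x in Set.Ici (0:ℝ),
            (0 : ℂ) * (starRingEnd ℂ) (0 : ℂ) * Real.exp (al * x))
      = 1) := by
  have hT0c : (T : ℂ) ≠ 0 := by exact_mod_cast hT.ne'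
  have hgn0 : ∀ n : ℤ, gnstar T lm al n 0 = 0 := fun n =>
    intervalIntegral.integral_same
  have hgf0 : ∀ m : ℤ, gfun T lm al m 0 = 0 := by
    intro m
    simp [gfun]
  refine ⟨?_, ?_, ?_, ?_⟩
  · intro m n
    rw [hgn0 n, map_zero, mul_zero, zero_add]
    rw [show (∫ x in Set.Ici (0:ℝ),
        dgfun T lm al m x * (starRingEnd ℂ) (dgnstar T lm al n x) * Real.exp (al * x))
      = ∫ y in Set.Ici (0:ℝ),
          (((1 - Real.exp (-2 * lm * T)) / T : ℝ) : ℂ)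
            * Real.exp (-2 * lm * T * (⌊y / T⌋ : ℝ))
            * Complex.exp (2 * Real.pi * Complex.I * ((m : ℂ) - n) / T * y) from by
      refine setIntegral_congr_fun measurableSet_Ici fun y _ => ?_
      exact key_integrand T lm al hT m n y]
    exact main_integral T lm hT hl m n
  · intro n
    rw [hgn0 n, map_zero, mul_zero, zero_add]
    simp
  · intro m
    rw [hgf0 m, zero_mul, zero_add]
    simp
  · simp [gstar]
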